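/- Let q be a prime power, d ≥ 1 an integer, χ a nontrivial additive character of 𝔽_q, A, B ⊆ 𝔽_q^d, and α ∈ 𝔽_q with α ≠ 0. Then |∑_{x ∈ B} S_{A,α}(x)|^2 ≤ |B| · q^d · |∑_{s, s' ∈ 𝔽_q^*} ∑_{y, y' ∈ A, s y = s' y'} χ(α(s' − s))|, where S_{A,α}(x) = ∑_{s ∈ 𝔽_q^*} ∑_{y ∈ A} χ(s(x·y − α)) and the inner sum in the right-hand side is over all pairs (y, y') ∈ A × A with s y = s' y' in 𝔽_q^d. -/

import Mathlib

/-- The dot product on `𝔽_q^d`. -/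
def dotp {F : Type} [Field F] {d : ℕ} (x y : Fin d → F) : F := ∑ i, x i * y i

/-- For `A, B ⊆ 𝔽_q^d` and `α ≠ 0`,
`|∑_{x ∈ B} S_{A,α}(x)|^2 ≤ |B| q^d |∑_{s,s' ∈ 𝔽_q^*} ∑_{y,y' ∈ A, sy = s'y'} χ(α(s' − s))|`,
where `S_{A,α}(x) = ∑_{s ∈ 𝔽_q^*} ∑_{y ∈ A} χ(s(x·y − α))`. -/
lemma dotp_lin {F : Type} [Field F] {d : ℕ} (x y y' : Fin d → F) (s s' : F) :
    dotp x (s • y - s' • y') = s * dotp x y - s' * dotp x y' := by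
  simp only [dotp, Finset.mul_sum, ← Finset.sum_sub_distrib]
  exact Finset.sum_congr rfl fun i _ => by simp [Pi.sub_apply, Pi.smul_apply, smul_eq_mul]; ring

lemma achar_map_sum {F : Type} [Field F] (χ : AddChar F ℂ) {ι : Type} (s : Finset ι)
    (f : ι → F) : χ (∑ i ∈ s, f i) = ∏ i ∈ s, χ (f i) := by
  classical
  induction s using Finset.cons_induction with
  | empty => simp
  | cons a s ha ih =>
    rw [Finset.sum_cons, Finset.prod_cons, AddChar.map_add_eq_mul, ih]

lemma key_sum {F : Type} [Field F] [Fintype F] [DecidableEq F] {d : ℕ}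
    (χ : AddChar F ℂ) (hχ : χ ≠ 1) (v : Fin d → F) :
    ∑ x : Fin d → F, χ (dotp x v) = if v = 0 then ((Fintype.card F : ℂ)) ^ d else 0 := by
  have hprim : χ.IsPrimitive := AddChar.IsPrimitive.of_ne_one hχ
  have h1 : ∀ x : Fin d → F, χ (dotp x v) = ∏ i, χ (x i * v i) := fun x =>
    achar_map_sum χ Finset.univ fun i => x i * v i
  simp_rw [h1]
  rw [← Fintype.prod_sum fun i t => χ (t * v i)]
  have h2 : ∀ i : Fin d, (∑ t : F, χ (t * v i)) = if v i = 0 then (Fintype.card F : ℂ) else 0 :=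
    fun i => by rw [AddChar.sum_mulShift (v i) hprim]; split_ifs <;> simp
  simp_rw [h2]
  by_cases hv : v = 0
  · simp [hv]
  · rw [if_neg hv]
    obtain ⟨i, hi⟩ := Function.ne_iff.mp hv
    exact Finset.prod_eq_zero (Finset.mem_univ i) (if_neg hi)

lemma conj_achar {F : Type} [Field F] [Fintype F] (χ : AddChar F ℂ) (t : F) :
    (starRingEnd ℂ) (χ t) = χ (-t) := by
  have h : 0 < ringChar F :=
    Nat.pos_of_ne_zero (CharP.char_ne_zero_of_finite F (ringChar F))
  rw [AddChar.starComp_apply h, AddChar.inv_apply]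

theorem stmt17 (F : Type) [Field F] [Fintype F] [DecidableEq F] (d : ℕ) (hd : 1 ≤ d)
    (χ : AddChar F ℂ) (hχ : χ ≠ 1) (A B : Finset (Fin d → F)) (α : F) (hα : α ≠ 0) :
    (‖∑ x ∈ B, ∑ s ∈ Finset.univ.erase (0 : F), ∑ y ∈ A,
        χ (s * (dotp x y - α))‖) ^ 2 ≤
      (B.card : ℝ) * (Fintype.card F : ℝ) ^ d *
        ‖∑ s ∈ Finset.univ.erase (0 : F), ∑ s' ∈ Finset.univ.erase (0 : F),
          ∑ y ∈ A, ∑ y' ∈ A,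
            if s • y = s' • y' then χ (α * (s' - s)) else 0‖ := by
  set E := (Finset.univ : Finset F).erase 0 with hE
  set S : (Fin d → F) → ℂ := fun x => ∑ s ∈ E, ∑ y ∈ A, χ (s * (dotp x y - α)) with hS
  set T : ℂ := ∑ s ∈ E, ∑ s' ∈ E, ∑ y ∈ A, ∑ y' ∈ A,
      if s • y = s' • y' then χ (α * (s' - s)) else 0 with hT
  have q0 : (0:ℝ) ≤ (Fintype.card F : ℝ) := Nat.cast_nonneg _
  -- Expand S x * conj (S x)
  have expand : ∀ x : Fin d → F, S x * (starRingEnd ℂ) (S x) =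
      ∑ s ∈ E, ∑ s' ∈ E, ∑ y ∈ A, ∑ y' ∈ A,
        χ (α * (s' - s)) * χ (dotp x (s • y - s' • y')) := by
    intro x
    have hconj : (starRingEnd ℂ) (S x) =
        ∑ s' ∈ E, ∑ y' ∈ A, χ (-(s' * (dotp x y' - α))) := by
      rw [hS]
      simp only [map_sum, conj_achar]
    rw [hconj, hS]
    rw [Finset.sum_mul_sum]
    refine Finset.sum_congr rfl fun s _ => Finset.sum_congr rfl fun s' _ => ?_
    rw [Finset.sum_mul_sum]
    refine Finset.sum_congr rfl fun y _ => Finset.sum_congr rfl fun y' _ => ?_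
    rw [← AddChar.map_add_eq_mul, ← AddChar.map_add_eq_mul, dotp_lin]
    congr 1
    ring
  -- The main identity
  have claim : ∑ x : Fin d → F, S x * (starRingEnd ℂ) (S x) =
      ((Fintype.card F : ℂ)) ^ d * T := by
    have rhs : ((Fintype.card F : ℂ)) ^ d * T =
        ∑ s ∈ E, ∑ s' ∈ E, ∑ y ∈ A, ∑ y' ∈ A,
          ∑ x : Fin d → F, χ (α * (s' - s)) * χ (dotp x (s • y - s' • y')) := by
      rw [hT, Finset.mul_sum]
      refine Finset.sum_congr rfl fun s _ => ?_
      rw [Finset.mul_sum]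
      refine Finset.sum_congr rfl fun s' _ => ?_
      rw [Finset.mul_sum]
      refine Finset.sum_congr rfl fun y _ => ?_
      rw [Finset.mul_sum]
      refine Finset.sum_congr rfl fun y' _ => ?_
      rw [← Finset.mul_sum, key_sum χ hχ]
      simp only [sub_eq_zero]
      split_ifs <;> ring
    rw [rhs]
    simp_rw [expand]
    rw [Finset.sum_comm]
    refine Finset.sum_congr rfl fun s _ => ?_
    rw [Finset.sum_comm]
    refine Finset.sum_congr rfl fun s' _ => ?_
    rw [Finset.sum_comm]
    refine Finset.sum_congr rfl fun y _ => ?_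
    rw [Finset.sum_comm]
  -- the full sum of |S x|^2
  have habs : ∑ x : Fin d → F, (‖S x‖) ^ 2 =
      (Fintype.card F : ℝ) ^ d * ‖T‖ := by
    have h1 : ((∑ x : Fin d → F, (‖S x‖) ^ 2 : ℝ) : ℂ) =
        ∑ x : Fin d → F, S x * (starRingEnd ℂ) (S x) := by
      push_cast
      refine Finset.sum_congr rfl fun x _ => ?_
      rw [Complex.mul_conj]
      norm_cast
      exact Complex.sq_norm _
    have h2 : ‖((∑ x : Fin d → F, (‖S x‖) ^ 2 : ℝ) : ℂ)‖ =
        ∑ x : Fin d → F, (‖S x‖) ^ 2 := by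
      rw [Complex.norm_real, Real.norm_of_nonneg]
      positivity
    rw [← h2, h1, claim, norm_mul, norm_pow, Complex.norm_natCast]
  -- Cauchy–Schwarz chain
  have step1 : (‖∑ x ∈ B, S x‖) ^ 2 ≤
      (B.card : ℝ) * ∑ x ∈ B, (‖S x‖) ^ 2 := by
    calc (‖∑ x ∈ B, S x‖) ^ 2
        ≤ (∑ x ∈ B, ‖S x‖) ^ 2 :=
          pow_le_pow_left₀ (norm_nonneg _) (norm_sum_le _ _) 2
      _ ≤ (B.card : ℝ) * ∑ x ∈ B, (‖S x‖) ^ 2 :=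
          sq_sum_le_card_mul_sum_sq
  have step2 : ∑ x ∈ B, (‖S x‖) ^ 2 ≤
      ∑ x : Fin d → F, (‖S x‖) ^ 2 :=
    Finset.sum_le_sum_of_subset_of_nonneg (Finset.subset_univ B)
      (fun x _ _ => by positivity)
  calc (‖∑ x ∈ B, S x‖) ^ 2
      ≤ (B.card : ℝ) * ∑ x ∈ B, (‖S x‖) ^ 2 := step1
    _ ≤ (B.card : ℝ) * ∑ x : Fin d → F, (‖S x‖) ^ 2 := by
        exact mul_le_mul_of_nonneg_left step2 (Nat.cast_nonneg _)
    _ = (B.card : ℝ) * (Fintype.card F : ℝ) ^ d * ‖T‖ := by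
        rw [habs]; ring
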